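/- For every number of layers L, every choice of layer data as in the EIGN recursion, every orientation O, and every bijection π : E → E with permutation matrix P, the EIGN outputs computed on the permuted graph with the permuted orientation O_π and permuted inputs satisfy H^L_{equ,π}(P · X_equ, P · X_inv, O_π) = P · H^L_equ(X_equ, X_inv, O) and H^L_{inv,π}(P · X_equ, P · X_inv, O_π) = P · H^L_inv(X_equ, X_inv, O); that is, both EIGN outputs are permutation equivariant mappings. -/

import Mathlib

open Matrix

/-- `O` assigns to each edge either its endpoint pair `(s e, t e)` or the reversed pair. -/
def IsOrientation {V E : Type*} (s t : E → V) (O : E → V × V) : Prop :=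
  ∀ e, O e = (s e, t e) ∨ O e = (t e, s e)

/-- A direction-consistent orientation: an orientation which agrees with the direction
`(s e, t e)` on every directed edge. -/
def DirConsistent {V E : Type*} (s t : E → V) (dir : E → Bool) (O : E → V × V) : Prop :=
  IsOrientation s t O ∧ ∀ e, dir e = true → O e = (s e, t e)

/-- The magnetic equivariant boundary operator. -/
noncomputable def Bequ {V E : Type*} [DecidableEq V] (q : ℝ) (s t : E → V) (dir : E → Bool)
    (O : E → V × V) : Matrix V E ℂ :=
  Matrix.of fun v e =>
    if dir e then
      if v = s e then -Complex.exp (Complex.I * (Real.pi * q : ℂ))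
      else if v = t e then Complex.exp (-(Complex.I * (Real.pi * q : ℂ)))
      else 0
    else
      if v = (O e).1 then -1
      else if v = (O e).2 then 1
      else 0

/-- The magnetic invariant boundary operator. -/
noncomputable def Binv {V E : Type*} [DecidableEq V] (q : ℝ) (s t : E → V) (dir : E → Bool) :
    Matrix V E ℂ :=
  Matrix.of fun v e =>
    if dir e then
      if v = s e then Complex.exp (Complex.I * (Real.pi * q : ℂ))
      else if v = t e then Complex.exp (-(Complex.I * (Real.pi * q : ℂ)))
      else 0
    else
      if v = s e ∨ v = t e then 1 else 0

/-- The orientation-change matrix `Δ_{O,Ô}`. -/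
noncomputable def Delta {V E : Type*} [DecidableEq V] [DecidableEq E] (O Ohat : E → V × V) :
    Matrix E E ℂ :=
  Matrix.diagonal fun e => if O e = Ohat e then 1 else -1

/-- The EIGN recursion: given boundary data `(q, s, t, dir)`, activations `σe, σi`,
per-layer feature dimensions `de, di` (with intermediate node-level dimensions
`ke, kie, ki, kei`), per-layer node feature transformations `hequ, hie, hinv, hei`,
per-layer weight matrices, an orientation `O`, and inputs `Xe, Xi`, this returns for each
layer `l` the pair `(H^l_equ, H^l_inv)` of equivariant and invariant representations. -/
noncomputable def EIGN {V E : Type} [Fintype V] [Fintype E] [DecidableEq V]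
    (q : ℝ) (s t : E → V) (dir : E → Bool)
    (σe σi : ℂ → ℂ)
    (de di ke kie ki kei : ℕ → ℕ)
    (hequ : ∀ l, Matrix V (Fin (de l)) ℂ → Matrix V (Fin (ke l)) ℂ)
    (hie : ∀ l, Matrix V (Fin (di l)) ℂ → Matrix V (Fin (kie l)) ℂ)
    (hinv : ∀ l, Matrix V (Fin (di l)) ℂ → Matrix V (Fin (ki l)) ℂ)
    (hei : ∀ l, Matrix V (Fin (de l)) ℂ → Matrix V (Fin (kei l)) ℂ)
    (Wee : ∀ l, Matrix (Fin (ke l)) (Fin (de (l + 1))) ℂ)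
    (Wie : ∀ l, Matrix (Fin (kie l)) (Fin (de (l + 1))) ℂ)
    (We : ∀ l, Matrix (Fin (de l)) (Fin (de (l + 1))) ℂ)
    (Wii : ∀ l, Matrix (Fin (ki l)) (Fin (di (l + 1))) ℂ)
    (Wei : ∀ l, Matrix (Fin (kei l)) (Fin (di (l + 1))) ℂ)
    (Wi : ∀ l, Matrix (Fin (di l)) (Fin (di (l + 1))) ℂ)
    (WFee : ∀ l, Matrix (Fin (de (l + 1))) (Fin (de (l + 1))) ℂ)
    (WFie : ∀ l, Matrix (Fin (di (l + 1))) (Fin (de (l + 1))) ℂ)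
    (WFii : ∀ l, Matrix (Fin (di (l + 1))) (Fin (di (l + 1))) ℂ)
    (WFei : ∀ l, Matrix (Fin (de (l + 1))) (Fin (di (l + 1))) ℂ)
    (O : E → V × V)
    (Xe : Matrix E (Fin (de 0)) ℂ) (Xi : Matrix E (Fin (di 0)) ℂ) :
    (l : ℕ) → Matrix E (Fin (de l)) ℂ × Matrix E (Fin (di l)) ℂ
  | 0 => (Xe, Xi)
  | l + 1 =>
      let H := EIGN q s t dir σe σi de di ke kie ki kei hequ hie hinv hei
        Wee Wie We Wii Wei Wi WFee WFie WFii WFei O Xe Xi l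
      let Ze := ((Bequ q s t dir O)ᴴ * hequ l (Bequ q s t dir O * H.1) * Wee l
                + (Bequ q s t dir O)ᴴ * hie l (Binv q s t dir * H.2) * Wie l
                + H.1 * We l).map σe
      let Zi := ((Binv q s t dir)ᴴ * hinv l (Binv q s t dir * H.2) * Wii l
                + (Binv q s t dir)ᴴ * hei l (Bequ q s t dir O * H.1) * Wei l
                + H.2 * Wi l).map σi
      (((Ze * WFee l).hadamard (Zi * WFie l) + Ze).map σe,
       ((Zi * WFii l).hadamard ((Ze * WFei l).map fun z => ((‖z‖ : ℝ) : ℂ)) + Zi).map σi)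

/-- The permutation matrix of a bijection `π : E ≃ E`:
`[P]_{e,e'} = 1` if `e = π e'` and `0` otherwise. -/
noncomputable def permMatrix {E : Type} [Fintype E] [DecidableEq E] (π : Equiv.Perm E) :
    Matrix E E ℂ :=
  Matrix.of fun e e' => if e = π e' then 1 else 0

section AuxPerm

lemma permMatrix_mul' {E n : Type} [Fintype E] [DecidableEq E] (π : Equiv.Perm E)
    (M : Matrix E n ℂ) :
    permMatrix π * M = M.submatrix π.symm id := by
  ext e j
  simp only [permMatrix, Matrix.mul_apply, Matrix.of_apply, Matrix.submatrix_apply, id_eq,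
    ite_mul, one_mul, zero_mul]
  rw [Finset.sum_eq_single (π.symm e)]
  · simp
  · intro b _ hb
    rw [if_neg]
    intro h
    exact hb (by simp [h])
  · simp

lemma submatrix_mul_left' {E' E n m : Type} [Fintype n]
    (A : Matrix E n ℂ) (B : Matrix n m ℂ) (f : E' → E) :
    (A.submatrix f id) * B = (A * B).submatrix f id := by
  ext i j
  simp [Matrix.mul_apply]

lemma Bequ_perm {V E : Type} [DecidableEq V] (q : ℝ) (s t : E → V) (dir : E → Bool)
    (O : E → V × V) (π : Equiv.Perm E) :
    Bequ q (s ∘ π.symm) (t ∘ π.symm) (dir ∘ π.symm) (O ∘ π.symm)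
      = (Bequ q s t dir O).submatrix id π.symm := rfl

lemma Binv_perm {V E : Type} [DecidableEq V] (q : ℝ) (s t : E → V) (dir : E → Bool)
    (π : Equiv.Perm E) :
    Binv q (s ∘ π.symm) (t ∘ π.symm) (dir ∘ π.symm)
      = (Binv q s t dir).submatrix id π.symm := rfl

lemma add_submatrix' {E' E n : Type} (A B : Matrix E n ℂ) (f : E' → E) :
    A.submatrix f id + B.submatrix f id = (A + B).submatrix f id := rfl

lemma hadamard_submatrix' {E' E n : Type} (A B : Matrix E n ℂ) (f : E' → E) :
    (A.submatrix f id).hadamard (B.submatrix f id) = (A.hadamard B).submatrix f id := rfl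

lemma eign_perm_aux
    {V E : Type} [Fintype V] [Fintype E] [DecidableEq V] [DecidableEq E]
    (q : ℝ) (s t : E → V) (dir : E → Bool)
    (σe σi : ℂ → ℂ)
    (de di ke kie ki kei : ℕ → ℕ)
    (hequ : ∀ l, Matrix V (Fin (de l)) ℂ → Matrix V (Fin (ke l)) ℂ)
    (hie : ∀ l, Matrix V (Fin (di l)) ℂ → Matrix V (Fin (kie l)) ℂ)
    (hinv : ∀ l, Matrix V (Fin (di l)) ℂ → Matrix V (Fin (ki l)) ℂ)
    (hei : ∀ l, Matrix V (Fin (de l)) ℂ → Matrix V (Fin (kei l)) ℂ)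
    (Wee : ∀ l, Matrix (Fin (ke l)) (Fin (de (l + 1))) ℂ)
    (Wie : ∀ l, Matrix (Fin (kie l)) (Fin (de (l + 1))) ℂ)
    (We : ∀ l, Matrix (Fin (de l)) (Fin (de (l + 1))) ℂ)
    (Wii : ∀ l, Matrix (Fin (ki l)) (Fin (di (l + 1))) ℂ)
    (Wei : ∀ l, Matrix (Fin (kei l)) (Fin (di (l + 1))) ℂ)
    (Wi : ∀ l, Matrix (Fin (di l)) (Fin (di (l + 1))) ℂ)
    (WFee : ∀ l, Matrix (Fin (de (l + 1))) (Fin (de (l + 1))) ℂ)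
    (WFie : ∀ l, Matrix (Fin (di (l + 1))) (Fin (de (l + 1))) ℂ)
    (WFii : ∀ l, Matrix (Fin (di (l + 1))) (Fin (di (l + 1))) ℂ)
    (WFei : ∀ l, Matrix (Fin (de (l + 1))) (Fin (di (l + 1))) ℂ)
    (O : E → V × V) (π : Equiv.Perm E)
    (Xe : Matrix E (Fin (de 0)) ℂ) (Xi : Matrix E (Fin (di 0)) ℂ) (L : ℕ) :
    EIGN q (s ∘ π.symm) (t ∘ π.symm) (dir ∘ π.symm) σe σi de di ke kie ki kei
        hequ hie hinv hei Wee Wie We Wii Wei Wi WFee WFie WFii WFei (O ∘ π.symm)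
        (Xe.submatrix π.symm id) (Xi.submatrix π.symm id) L
      = ((EIGN q s t dir σe σi de di ke kie ki kei hequ hie hinv hei
            Wee Wie We Wii Wei Wi WFee WFie WFii WFei O Xe Xi L).1.submatrix π.symm id,
         (EIGN q s t dir σe σi de di ke kie ki kei hequ hie hinv hei
            Wee Wie We Wii Wei Wi WFee WFie WFii WFei O Xe Xi L).2.submatrix π.symm id) := by
  induction L with
  | zero => rfl
  | succ l ih =>
    simp only [EIGN, ih]
    have key : ∀ {n : Type} (B : Matrix V E ℂ) (H : Matrix E n ℂ) [Fintype n],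
        (B.submatrix id π.symm) * (H.submatrix π.symm id) = B * H := by
      intro n B H _
      rw [show (π.symm : E → E) = (π.symm : Equiv.Perm E) from rfl,
        Matrix.submatrix_mul_equiv B H id (π.symm : E ≃ E) id, Matrix.submatrix_id_id]
    have keyH : ∀ {n m : Type} [Fintype n] (B : Matrix V E ℂ) (K : Matrix V n ℂ)
        (W : Matrix n m ℂ),
        (B.submatrix id π.symm)ᴴ * K * W = ((Bᴴ * K * W).submatrix π.symm id) := by
      intro n m _ B K W
      rw [Matrix.conjTranspose_submatrix, submatrix_mul_left', submatrix_mul_left']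
    rw [Bequ_perm, Binv_perm]
    simp only [key, keyH, submatrix_mul_left', add_submatrix', ← Matrix.submatrix_map,
      hadamard_submatrix']

end AuxPerm

/-- Both EIGN outputs are permutation equivariant: running the same EIGN recursion on the
permuted graph (endpoints `s ∘ π⁻¹, t ∘ π⁻¹`, directed edges `π(E_D)`, orientation
`O ∘ π⁻¹`) with permuted inputs `P·X_equ, P·X_inv` yields `P·H^L_equ` and `P·H^L_inv`. -/
theorem eign_outputs_permutation_equivariant
    {V E : Type} [Fintype V] [Fintype E] [DecidableEq V] [DecidableEq E]
    (q : ℝ) (s t : E → V) (dir : E → Bool)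
    (σe σi : ℂ → ℂ) (hσe : ∀ x, σe (-x) = -σe x)
    (de di ke kie ki kei : ℕ → ℕ)
    (hequ : ∀ l, Matrix V (Fin (de l)) ℂ → Matrix V (Fin (ke l)) ℂ)
    (hie : ∀ l, Matrix V (Fin (di l)) ℂ → Matrix V (Fin (kie l)) ℂ)
    (hinv : ∀ l, Matrix V (Fin (di l)) ℂ → Matrix V (Fin (ki l)) ℂ)
    (hei : ∀ l, Matrix V (Fin (de l)) ℂ → Matrix V (Fin (kei l)) ℂ)
    (Wee : ∀ l, Matrix (Fin (ke l)) (Fin (de (l + 1))) ℂ)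
    (Wie : ∀ l, Matrix (Fin (kie l)) (Fin (de (l + 1))) ℂ)
    (We : ∀ l, Matrix (Fin (de l)) (Fin (de (l + 1))) ℂ)
    (Wii : ∀ l, Matrix (Fin (ki l)) (Fin (di (l + 1))) ℂ)
    (Wei : ∀ l, Matrix (Fin (kei l)) (Fin (di (l + 1))) ℂ)
    (Wi : ∀ l, Matrix (Fin (di l)) (Fin (di (l + 1))) ℂ)
    (WFee : ∀ l, Matrix (Fin (de (l + 1))) (Fin (de (l + 1))) ℂ)
    (WFie : ∀ l, Matrix (Fin (di (l + 1))) (Fin (de (l + 1))) ℂ)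
    (WFii : ∀ l, Matrix (Fin (di (l + 1))) (Fin (di (l + 1))) ℂ)
    (WFei : ∀ l, Matrix (Fin (de (l + 1))) (Fin (di (l + 1))) ℂ)
    (O : E → V × V) (hO : IsOrientation s t O)
    (π : Equiv.Perm E)
    (Xe : Matrix E (Fin (de 0)) ℂ) (Xi : Matrix E (Fin (di 0)) ℂ) (L : ℕ) :
    (EIGN q (s ∘ π.symm) (t ∘ π.symm) (dir ∘ π.symm) σe σi de di ke kie ki kei
        hequ hie hinv hei Wee Wie We Wii Wei Wi WFee WFie WFii WFei (O ∘ π.symm)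
        (permMatrix π * Xe) (permMatrix π * Xi) L).1
      = permMatrix π *
        (EIGN q s t dir σe σi de di ke kie ki kei hequ hie hinv hei
          Wee Wie We Wii Wei Wi WFee WFie WFii WFei O Xe Xi L).1
    ∧
    (EIGN q (s ∘ π.symm) (t ∘ π.symm) (dir ∘ π.symm) σe σi de di ke kie ki kei
        hequ hie hinv hei Wee Wie We Wii Wei Wi WFee WFie WFii WFei (O ∘ π.symm)
        (permMatrix π * Xe) (permMatrix π * Xi) L).2
      = permMatrix π *
        (EIGN q s t dir σe σi de di ke kie ki kei hequ hie hinv hei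
          Wee Wie We Wii Wei Wi WFee WFie WFii WFei O Xe Xi L).2 := by
  rw [permMatrix_mul', permMatrix_mul', eign_perm_aux, permMatrix_mul', permMatrix_mul']
  exact ⟨rfl, rfl⟩
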